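/- Equivalence of aperiodicity-failure characterizations: for an irreducible aperiodic finite-state stochastic matrix P and g : W → ℤ, the condition '{(g(Q), ℓ(Q)) : Q closed path} generates ℤ²' FAILS if and only if there exist an integer N ≥ 2, an integer b, and integers γ_i (i ∈ W) such that γ_j ≡ γ_i + g(j) − b (mod N) whenever P_{ij} > 0. -/

import Mathlib

lemma powNonneg {W : Type*} [Fintype W] [DecidableEq W] (P : Matrix W W ℝ)
    (hnn : ∀ i j, 0 ≤ P i j) : ∀ (n : ℕ) i j, 0 ≤ (P ^ n) i j := by
  intro n
  induction n with
  | zero => intro i j; by_cases h : i = j <;> simp [Matrix.one_apply, h]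
  | succ n ih =>
      intro i j
      rw [pow_succ, Matrix.mul_apply]
      exact Finset.sum_nonneg fun k _ => mul_nonneg (ih i k) (hnn k j)

lemma pathOfPow {W : Type*} [Fintype W] [DecidableEq W] (P : Matrix W W ℝ)
    (hnn : ∀ i j, 0 ≤ P i j) :
    ∀ (n : ℕ) i j, 0 < (P ^ n) i j →
      ∃ p : ℕ → W, p 0 = i ∧ p n = j ∧ ∀ k < n, 0 < P (p k) (p (k + 1)) := by
  intro n
  induction n with
  | zero =>
      intro i j h
      rw [pow_zero] at h
      by_cases hij : i = j
      · exact ⟨fun _ => i, rfl, hij, by omega⟩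
      · simp [Matrix.one_apply, hij] at h
  | succ n ih =>
      intro i j h
      rw [pow_succ, Matrix.mul_apply] at h
      obtain ⟨k, hk⟩ := Finset.exists_lt_of_sum_lt (f := fun _ => (0:ℝ)) (by simpa using h)
      have hk' : 0 < (P ^ n) i k * P k j := hk.2
      have h1 : 0 < (P ^ n) i k := by
        rcases lt_or_eq_of_le (powNonneg P hnn n i k) with h' | h'
        · exact h'
        · rw [← h'] at hk'; simp at hk'
      have h2 : 0 < P k j := by
        rcases lt_or_eq_of_le (hnn k j) with h' | h'
        · exact h'
        · rw [← h'] at hk'; simp at hk'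
      obtain ⟨p, hp0, hpn, hpe⟩ := ih i k h1
      refine ⟨fun m => if m ≤ n then p m else j, by simp [hp0], by simp, ?_⟩
      intro m hm
      by_cases hmn : m < n
      · have hA : m ≤ n := by omega
        have hB : m + 1 ≤ n := by omega
        simpa [hA, hB] using hpe m hmn
      · have hmeq : m = n := by omega
        subst hmeq
        simp only [le_refl, if_pos, Nat.lt_irrefl]
        have : ¬ (m + 1 ≤ m) := by omega
        simpa [this, hpn] using h2

lemma concatPath {W : Type*} [Fintype W] [DecidableEq W] (P : Matrix W W ℝ) (g : W → ℤ)
    (n m : ℕ) (p q : ℕ → W) (hm : 1 ≤ m)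
    (hp : ∀ k < n, 0 < P (p k) (p (k + 1))) (hq : ∀ k < m, 0 < P (q k) (q (k + 1)))
    (hpq : q 0 = p n) :
    ∃ r : ℕ → W, r 0 = p 0 ∧ r (n + m) = q m ∧ (∀ k < n + m, 0 < P (r k) (r (k + 1))) ∧
      ∑ k ∈ Finset.range (n + m), g (r (k + 1)) =
        (∑ k ∈ Finset.range n, g (p (k + 1))) + ∑ k ∈ Finset.range m, g (q (k + 1)) := by
  refine ⟨fun k => if k ≤ n then p k else q (k - n), by simp, ?_, ?_, ?_⟩
  · have h1 : ¬ (n + m ≤ n) := by omega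
    simp [h1]
  · intro k hk
    rcases lt_trichotomy k n with h | h | h
    · have h1 : k ≤ n := by omega
      have h2 : k + 1 ≤ n := by omega
      simpa [h1, h2] using hp k h
    · subst h
      by_cases h2 : k + 1 ≤ k
      · omega
      · simpa [h2, hpq] using hq 0 (by omega)
    · have h1 : ¬ (k ≤ n) := by omega
      have h2 : ¬ (k + 1 ≤ n) := by omega
      have h3 : k + 1 - n = (k - n) + 1 := by omega
      simp only [h1, h2, if_neg, not_false_iff, h3]
      exact hq (k - n) (by omega)
  · rw [Finset.sum_range_add]
    congr 1
    · exact Finset.sum_congr rfl fun k hk => by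
        have : k + 1 ≤ n := by simp at hk; omega
        simp [this]
    · refine Finset.sum_congr rfl fun k hk => ?_
      have h1 : ¬ (n + k + 1 ≤ n) := by omega
      have h2 : n + k + 1 - n = k + 1 := by omega
      simp [h1, h2]

/-- The generation condition '{(g(Q), ℓ(Q)) : Q closed path} generates ℤ²' fails iff there
exist `N ≥ 2`, `b` and integers `γ_i` with `γ_j ≡ γ_i + g(j) − b (mod N)` whenever
`P_{ij} > 0`. -/
theorem statement14 {W : Type*} [Fintype W] [DecidableEq W] (P : Matrix W W ℝ)
    (hnn : ∀ i j, 0 ≤ P i j) (hrow : ∀ i, ∑ j, P i j = 1)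
    (hirr : ∀ i j, ∃ n : ℕ, 1 ≤ n ∧ 0 < (P ^ n) i j)
    (haper : AddSubgroup.closure {L : ℤ | ∃ (n : ℕ) (p : ℕ → W), 1 ≤ n ∧
        (∀ k < n, 0 < P (p k) (p (k + 1))) ∧ p n = p 0 ∧ L = n} = ⊤)
    (g : W → ℤ) :
    (¬ (AddSubgroup.closure {v : ℤ × ℤ | ∃ (n : ℕ) (p : ℕ → W), 1 ≤ n ∧
        (∀ k < n, 0 < P (p k) (p (k + 1))) ∧ p n = p 0 ∧
        v = (∑ k ∈ Finset.range n, g (p (k + 1)), (n : ℤ))} = ⊤)) ↔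
    ∃ (N : ℤ), 2 ≤ N ∧ ∃ (b : ℤ) (γ : W → ℤ),
      ∀ i j, 0 < P i j → γ j ≡ γ i + g j - b [ZMOD N] := by
  set S : Set (ℤ × ℤ) := {v : ℤ × ℤ | ∃ (n : ℕ) (p : ℕ → W), 1 ≤ n ∧
        (∀ k < n, 0 < P (p k) (p (k + 1))) ∧ p n = p 0 ∧
        v = (∑ k ∈ Finset.range n, g (p (k + 1)), (n : ℤ))} with hS
  set H := AddSubgroup.closure S with hH
  constructor
  · -- forward
    intro h
    -- W is nonempty
    have hne : Nonempty W := by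
      by_contra hW
      rw [not_nonempty_iff] at hW
      have hempty : {L : ℤ | ∃ (n : ℕ) (p : ℕ → W), 1 ≤ n ∧
          (∀ k < n, 0 < P (p k) (p (k + 1))) ∧ p n = p 0 ∧ L = n} = ∅ := by
        ext L
        simp only [Set.mem_setOf_eq, Set.mem_empty_iff_false, iff_false]
        rintro ⟨n, p, -⟩
        exact hW.false (p 0)
      rw [hempty, AddSubgroup.closure_empty] at haper
      have h1 : (1:ℤ) ∈ (⊥ : AddSubgroup ℤ) := by rw [haper]; trivial
      simp at h1
    -- get (b, 1) ∈ H
    obtain ⟨x, hxH, hx2⟩ : ∃ x ∈ H, x.2 = 1 := by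
      have hmap : AddSubgroup.map (AddMonoidHom.snd ℤ ℤ) H = ⊤ := by
        rw [hH, AddMonoidHom.map_closure]
        convert haper using 2
        ext L
        constructor
        · rintro ⟨v, ⟨n, p, hn, he, hc, rfl⟩, rfl⟩
          exact ⟨n, p, hn, he, hc, rfl⟩
        · rintro ⟨n, p, hn, he, hc, rfl⟩
          exact ⟨_, ⟨n, p, hn, he, hc, rfl⟩, rfl⟩
      have h1 : (1 : ℤ) ∈ AddSubgroup.map (AddMonoidHom.snd ℤ ℤ) H := by rw [hmap]; trivial
      obtain ⟨x, hx, hx1⟩ := h1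
      exact ⟨x, hx, hx1⟩
    set b := x.1 with hb
    have hbH : ((b, 1) : ℤ × ℤ) ∈ H := by
      have hxx : x = (b, 1) := Prod.ext rfl hx2
      rwa [← hxx]
    -- the subgroup of first coordinates with second coordinate 0
    obtain ⟨a, ha⟩ := Int.subgroup_cyclic (H.comap (AddMonoidHom.inl ℤ ℤ))
    set N0 : ℕ := a.natAbs with hN0
    have hmemK : ∀ v : ℤ, ((v, 0) : ℤ × ℤ) ∈ H ↔ (N0 : ℤ) ∣ v := by
      intro v
      have hiff : ((v, 0) : ℤ × ℤ) ∈ H ↔ v ∈ H.comap (AddMonoidHom.inl ℤ ℤ) := by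
        simp [AddSubgroup.mem_comap]
      rw [hiff, ha, AddSubgroup.mem_closure_singleton, hN0, Int.natAbs_dvd]
      constructor
      · rintro ⟨k, hk⟩
        exact ⟨k, by rw [← hk]; simp [mul_comm]⟩
      · rintro ⟨c, rfl⟩
        exact ⟨c, by simp [mul_comm]⟩
    -- key divisibility for closed paths
    have key : ∀ (n : ℕ) (p : ℕ → W), 1 ≤ n → (∀ k < n, 0 < P (p k) (p (k + 1))) →
        p n = p 0 → (N0 : ℤ) ∣ (∑ k ∈ Finset.range n, g (p (k + 1))) - n * b := by
      intro n p hn he hc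
      have hx : ((∑ k ∈ Finset.range n, g (p (k + 1)), (n : ℤ)) : ℤ × ℤ) ∈ H :=
        AddSubgroup.subset_closure ⟨n, p, hn, he, hc, rfl⟩
      have h2 : (((∑ k ∈ Finset.range n, g (p (k + 1))) - n * b, (0:ℤ)) : ℤ × ℤ) ∈ H := by
        have hmem := H.sub_mem hx (H.nsmul_mem hbH n)
        convert hmem using 1
        simp [Prod.ext_iff, nsmul_eq_mul]
      exact (hmemK _).mp h2
    -- N0 ≠ 1
    have hN0ne1 : N0 ≠ 1 := by
      intro h1
      apply h
      rw [AddSubgroup.eq_top_iff']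
      intro v
      have hv : v = ((v.1 - v.2 * b, 0) : ℤ × ℤ) + v.2 • ((b, 1) : ℤ × ℤ) := by
        simp [Prod.ext_iff, smul_eq_mul]
      rw [hv]
      exact H.add_mem ((hmemK _).mpr (by simp [h1])) (H.zsmul_mem hbH _)
    -- choose paths
    have hpath : ∀ i j : W, ∃ (n : ℕ) (p : ℕ → W), 1 ≤ n ∧ p 0 = i ∧ p n = j ∧
        ∀ k < n, 0 < P (p k) (p (k + 1)) := by
      intro i j
      obtain ⟨n, hn1, hn⟩ := hirr i j
      obtain ⟨p, h0, hn', he⟩ := pathOfPow P hnn n i j hn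
      exact ⟨n, p, hn1, h0, hn', he⟩
    choose nf pf hnf hp0 hpn hpe using hpath
    obtain ⟨w0⟩ := hne
    refine ⟨if N0 = 0 then 2 else (N0 : ℤ), ?_, b,
      fun i => (∑ k ∈ Finset.range (nf w0 i), g (pf w0 i (k + 1))) - (nf w0 i) * b, ?_⟩
    · split_ifs with h0
      · norm_num
      · have h2 : 2 ≤ N0 := by omega
        exact_mod_cast h2
    · intro i j hij
      -- edge path of length 1 from i to j
      set pe : ℕ → W := fun k => if k = 0 then i else j with hpe1
      have hpe_edge : ∀ k < 1, 0 < P (pe k) (pe (k + 1)) := by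
        intro k hk
        interval_cases k
        simpa [hpe1] using hij
      -- extended path from w0 to j via i
      obtain ⟨r, hr0, hrend, hredge, hrsum⟩ := concatPath P g (nf w0 i) 1 (pf w0 i) pe
        le_rfl (hpe w0 i) hpe_edge (by simp [hpe1, hpn w0 i])
      -- return path from j to w0
      -- closed path 1 : w0 → i → j → w0
      obtain ⟨c1, hc10, hc1end, hc1edge, hc1sum⟩ := concatPath P g (nf w0 i + 1) (nf j w0)
        r (pf j w0) (hnf j w0) hredge (hpe j w0) (by rw [hp0 j w0, hrend]; simp [hpe1])
      -- closed path 2 : w0 → j → w0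
      obtain ⟨c2, hc20, hc2end, hc2edge, hc2sum⟩ := concatPath P g (nf w0 j) (nf j w0)
        (pf w0 j) (pf j w0) (hnf j w0) (hpe w0 j) (hpe j w0)
        (by rw [hp0 j w0, hpn w0 j])
      have hd1 : (N0 : ℤ) ∣ (∑ k ∈ Finset.range ((nf w0 i + 1) + nf j w0), g (c1 (k + 1)))
          - ((nf w0 i + 1) + nf j w0) * b :=
        key _ c1 (by omega) hc1edge (by rw [hc1end, hpn j w0, hc10, hr0, hp0 w0 i])
      have hd2 : (N0 : ℤ) ∣ (∑ k ∈ Finset.range (nf w0 j + nf j w0), g (c2 (k + 1)))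
          - (nf w0 j + nf j w0) * b :=
        key _ c2 (by have := hnf w0 j; omega) hc2edge (by rw [hc2end, hpn j w0, hc20, hp0 w0 j])
      have hsum_pe : ∑ k ∈ Finset.range 1, g (pe (k + 1)) = g j := by
        simp [hpe1]
      rw [hc1sum, hrsum, hsum_pe] at hd1
      rw [hc2sum] at hd2
      have hdvd : (N0 : ℤ) ∣ ((∑ k ∈ Finset.range (nf w0 i), g (pf w0 i (k + 1)))
            - (nf w0 i) * b + g j - b)
          - ((∑ k ∈ Finset.range (nf w0 j), g (pf w0 j (k + 1))) - (nf w0 j) * b) := by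
        have : (N0 : ℤ) ∣ _ := dvd_sub hd1 hd2
        convert this using 1
        push_cast
        ring
      have hmod : ((∑ k ∈ Finset.range (nf w0 j), g (pf w0 j (k + 1))) - (nf w0 j) * b) ≡
          ((∑ k ∈ Finset.range (nf w0 i), g (pf w0 i (k + 1))) - (nf w0 i) * b + g j - b)
            [ZMOD ((N0 : ℕ) : ℤ)] := by
        rw [Int.modEq_iff_dvd]
        convert hdvd using 1
      have hdiv : (if N0 = 0 then 2 else (N0 : ℤ)) ∣ ((N0 : ℕ) : ℤ) := by
        split_ifs with h0
        · simp [h0]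
        · exact dvd_refl _
      exact Int.ModEq.of_dvd hdiv hmod
  · -- backward
    rintro ⟨N, hN, b, γ, hγ⟩ htop
    set M : ℕ := N.toNat with hM
    have hMN : (M : ℤ) = N := Int.toNat_of_nonneg (by omega)
    haveI : Fact (1 < M) := ⟨by omega⟩
    set φ : ℤ × ℤ →+ ZMod M :=
      { toFun := fun x => (x.1 : ZMod M) - (x.2 : ZMod M) * (b : ZMod M)
        map_zero' := by simp
        map_add' := by
          intro x y
          simp only [Prod.fst_add, Prod.snd_add]
          push_cast
          ring } with hφ
    have hker : H ≤ φ.ker := by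
      rw [hH, AddSubgroup.closure_le]
      rintro v ⟨n, p, hn, hedge, hclosed, rfl⟩
      have tele : ∀ m, m ≤ n → ((γ (p m) : ℤ) : ZMod M) =
          ((γ (p 0) : ℤ) : ZMod M) + ((∑ k ∈ Finset.range m, g (p (k + 1)) : ℤ) : ZMod M)
            - (m : ZMod M) * (b : ZMod M) := by
        intro m
        induction m with
        | zero => simp
        | succ m ih =>
            intro hm
            have hmn : m < n := by omega
            have hcast : ((γ (p (m + 1)) : ℤ) : ZMod M) =
                ((γ (p m) + g (p (m + 1)) - b : ℤ) : ZMod M) := by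
              rw [ZMod.intCast_eq_intCast_iff]
              have hc := hγ (p m) (p (m + 1)) (hedge m hmn)
              rwa [show ((M : ℕ) : ℤ) = N from hMN]
            have ihm := ih (by omega)
            rw [hcast, Finset.sum_range_succ]
            push_cast at ihm ⊢
            rw [ihm]
            ring
      have htel := tele n le_rfl
      rw [hclosed] at htel
      have hz : ((∑ k ∈ Finset.range n, g (p (k + 1)) : ℤ) : ZMod M)
          - (n : ZMod M) * (b : ZMod M) = 0 := by
        linear_combination -htel
      show φ _ = 0
      simp only [hφ, AddMonoidHom.coe_mk, ZeroHom.coe_mk]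
      push_cast
      push_cast at hz
      linear_combination hz
    rw [htop] at hker
    have h1 : φ ((1 : ℤ), (0 : ℤ)) = 0 := hker (AddSubgroup.mem_top _)
    simp only [hφ, AddMonoidHom.coe_mk, ZeroHom.coe_mk] at h1
    norm_num at h1
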